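/- Let μ, L₁ > 0 with μ ≤ L₁, and let N_tr > 0. Suppose N* ≥ 1 satisfies (1 + (μ/(4L₁))√(N*/N_tr))^{N*} = 1/ε' for some ε' ∈ (0,1). Then N* ≥ ((4L₁√N_tr/μ) log(1/ε'))^{2/3} and N* ≤ log(1/ε') / log(1 + (μ²/(16 L₁² N_tr) · log(1/ε'))^{1/3}). -/

import Mathlib

/-- Bounds on the crossover iteration count `N*` defined by
`(1 + (μ/(4L₁))√(N*/N_tr))^{N*} = 1/ε'`. -/
theorem crossover_iteration_bounds (μ L₁ Ntr ε' Nstar : ℝ)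
    (hμ : 0 < μ) (hμL : μ ≤ L₁) (hNtr : 0 < Ntr)
    (hNstar : 1 ≤ Nstar) (hε0 : 0 < ε') (hε1 : ε' < 1)
    (heq : (1 + (μ / (4 * L₁)) * Real.sqrt (Nstar / Ntr)) ^ Nstar = 1 / ε') :
    ((4 * L₁ * Real.sqrt Ntr / μ) * Real.log (1 / ε')) ^ ((2 : ℝ) / 3) ≤ Nstar ∧
    Nstar ≤ Real.log (1 / ε') /
      Real.log (1 + ((μ ^ 2 / (16 * L₁ ^ 2 * Ntr)) * Real.log (1 / ε')) ^ ((1 : ℝ) / 3)) := by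
  have hL1 : 0 < L₁ := lt_of_lt_of_le hμ hμL
  have hN0 : (0:ℝ) < Nstar := by linarith
  have hsN : 0 < Real.sqrt Nstar := Real.sqrt_pos.mpr hN0
  have hsT : 0 < Real.sqrt Ntr := Real.sqrt_pos.mpr hNtr
  have hsq : Real.sqrt (Nstar / Ntr) = Real.sqrt Nstar / Real.sqrt Ntr :=
    Real.sqrt_div hN0.le Ntr
  set a := μ / (4 * L₁) * Real.sqrt (Nstar / Ntr) with ha_def
  have ha : 0 < a := by
    rw [ha_def, hsq]; positivity
  have h1a : (0:ℝ) < 1 + a := by linarith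
  have hlog : Nstar * Real.log (1 + a) = Real.log (1 / ε') := by
    have := congrArg Real.log heq
    rw [Real.log_rpow h1a] at this
    linarith
  set L := Real.log (1 / ε') with hLdef
  have hLpos : 0 < L := Real.log_pos (one_lt_one_div hε0 hε1)
  have hla : Real.log (1 + a) ≤ a := by
    have := Real.log_le_sub_one_of_pos h1a; linarith
  have hstep : L ≤ Nstar * a := by
    calc L = Nstar * Real.log (1 + a) := hlog.symm
    _ ≤ Nstar * a := mul_le_mul_of_nonneg_left hla hN0.le
  set c := 4 * L₁ * Real.sqrt Ntr / μ with hc_def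
  have hcpos : 0 < c := by positivity
  have ha_eq : a = Real.sqrt Nstar / c := by
    rw [ha_def, hsq, hc_def]; field_simp
  have h32 : Nstar ^ ((3:ℝ)/2) = Nstar * Real.sqrt Nstar := by
    rw [show ((3:ℝ)/2) = 1 + (1:ℝ)/2 by norm_num, Real.rpow_add hN0, Real.rpow_one,
      Real.sqrt_eq_rpow]
  have hkey : c * L ≤ Nstar ^ ((3:ℝ)/2) := by
    have h1 : c * L ≤ c * (Nstar * a) := mul_le_mul_of_nonneg_left hstep hcpos.le
    have h2 : c * (Nstar * a) = Nstar * Real.sqrt Nstar := by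
      rw [ha_eq]; field_simp
    rw [h32]; linarith
  have hlower : (c * L) ^ ((2:ℝ)/3) ≤ Nstar := by
    have h23 : (c * L) ^ ((2:ℝ)/3) ≤ (Nstar ^ ((3:ℝ)/2)) ^ ((2:ℝ)/3) :=
      Real.rpow_le_rpow (by positivity) hkey (by norm_num)
    rwa [← Real.rpow_mul hN0.le, show ((3:ℝ)/2) * ((2:ℝ)/3) = 1 by norm_num,
      Real.rpow_one] at h23
  refine ⟨hlower, ?_⟩
  set b := ((μ ^ 2 / (16 * L₁ ^ 2 * Ntr)) * L) ^ ((1:ℝ)/3) with hb_def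
  have hbpos : 0 < b := by rw [hb_def]; positivity
  have hb3 : b ^ (3:ℕ) = (μ ^ 2 / (16 * L₁ ^ 2 * Ntr)) * L := by
    rw [hb_def, ← Real.rpow_natCast _ 3, ← Real.rpow_mul (by positivity)]
    norm_num
  have hc2 : c ^ 2 = 16 * L₁ ^ 2 * Ntr / μ ^ 2 := by
    rw [hc_def, div_pow]
    rw [show (4 * L₁ * Real.sqrt Ntr) ^ 2 = 16 * L₁ ^ 2 * Real.sqrt Ntr ^ 2 by ring,
      Real.sq_sqrt hNtr.le]
  have ha3 : a ^ (3:ℕ) = Nstar ^ ((3:ℝ)/2) / c ^ 3 := by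
    rw [ha_eq, div_pow, h32]
    congr 1
    rw [show Real.sqrt Nstar ^ 3 = Real.sqrt Nstar ^ 2 * Real.sqrt Nstar by ring,
      Real.sq_sqrt hN0.le]
  have hba3 : b ^ (3:ℕ) ≤ a ^ (3:ℕ) := by
    rw [hb3, ha3]
    have h1 : (μ ^ 2 / (16 * L₁ ^ 2 * Ntr)) * L = c * L / c ^ 3 := by
      have : c * L / c ^ 3 = L / c ^ 2 := by
        field_simp
      rw [this, hc2]
      field_simp
    rw [h1]
    exact div_le_div_of_nonneg_right hkey (by positivity) |>.trans_eq rfl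
  have hba : b ≤ a := le_of_pow_le_pow_left₀ (by norm_num) ha.le hba3
  have hlogb : 0 < Real.log (1 + b) := Real.log_pos (by linarith)
  have hloga : 0 < Real.log (1 + a) := Real.log_pos (by linarith)
  have hlogba : Real.log (1 + b) ≤ Real.log (1 + a) :=
    Real.log_le_log (by linarith) (by linarith)
  have hNeq : Nstar = L / Real.log (1 + a) := by
    field_simp at hlog ⊢
    linarith [hlog]
  rw [hNeq]
  exact div_le_div_of_nonneg_left hLpos.le hlogb hlogba
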